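/- arXiv:math-ph/0503002 — 2 statements merged into one kernel-verified Lean document; each statement's English description precedes it below -/
import Mathlib

section
/- In the Lie–Poisson algebra g^(3) on (ℝ^3)^3 with coordinates (y, x, z), the three functions C^(1) = ⟨y,z⟩ + (1/2)⟨x,x⟩, C^(2) = ⟨x,z⟩, and C^(3) = ⟨z,z⟩ are Casimir functions, i.e., their Poisson bracket with every coordinate function vanishes. -/
open Matrix

noncomputable section

abbrev G3 := (Fin 3 → ℝ) × (Fin 3 → ℝ) × (Fin 3 → ℝ)

def gradY (f : G3 → ℝ) (p : G3) : Fin 3 → ℝ :=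
  fun a => fderiv ℝ f p (Pi.single a 1, 0, 0)
def gradX (f : G3 → ℝ) (p : G3) : Fin 3 → ℝ :=
  fun a => fderiv ℝ f p (0, Pi.single a 1, 0)
def gradZ (f : G3 → ℝ) (p : G3) : Fin 3 → ℝ :=
  fun a => fderiv ℝ f p (0, 0, Pi.single a 1)

def pb3 (f g : G3 → ℝ) (p : G3) : ℝ :=
  p.1 ⬝ᵥ ((gradY f p) ⨯₃ (gradY g p))
    + p.2.1 ⬝ᵥ ((gradY f p) ⨯₃ (gradX g p) + (gradX f p) ⨯₃ (gradY g p))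
    + p.2.2 ⬝ᵥ ((gradY f p) ⨯₃ (gradZ g p) + (gradZ f p) ⨯₃ (gradY g p))
    + p.2.2 ⬝ᵥ ((gradX f p) ⨯₃ (gradX g p))

def coord3 (s a : Fin 3) (p : G3) : ℝ := ![p.1, p.2.1, p.2.2] s a

def Cas3 : Fin 3 → G3 → ℝ :=
  ![fun p => p.1 ⬝ᵥ p.2.2 + (1 / 2) * (p.2.1 ⬝ᵥ p.2.1),
    fun p => p.2.1 ⬝ᵥ p.2.2,
    fun p => p.2.2 ⬝ᵥ p.2.2]

def LY (i : Fin 3) : G3 →L[ℝ] ℝ :=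
  (ContinuousLinearMap.proj i).comp (ContinuousLinearMap.fst ℝ _ _)
def LX (i : Fin 3) : G3 →L[ℝ] ℝ :=
  (ContinuousLinearMap.proj i).comp ((ContinuousLinearMap.fst ℝ _ _).comp (ContinuousLinearMap.snd ℝ _ _))
def LZ (i : Fin 3) : G3 →L[ℝ] ℝ :=
  (ContinuousLinearMap.proj i).comp ((ContinuousLinearMap.snd ℝ _ _).comp (ContinuousLinearMap.snd ℝ _ _))

lemma hY (i : Fin 3) (p : G3) : HasFDerivAt (fun q : G3 => q.1 i) (LY i) p :=
  (LY i).hasFDerivAt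
lemma hX (i : Fin 3) (p : G3) : HasFDerivAt (fun q : G3 => q.2.1 i) (LX i) p :=
  (LX i).hasFDerivAt
lemma hZ (i : Fin 3) (p : G3) : HasFDerivAt (fun q : G3 => q.2.2 i) (LZ i) p :=
  (LZ i).hasFDerivAt

lemma hC1 (p : G3) : HasFDerivAt (Cas3 0)
    ((∑ i : Fin 3, (p.1 i • LZ i + p.2.2 i • LY i)) +
      (1/2 : ℝ) • (∑ i : Fin 3, (p.2.1 i • LX i + p.2.1 i • LX i))) p := by
  have h1 : HasFDerivAt (fun q : G3 => q.1 ⬝ᵥ q.2.2)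
      (∑ i : Fin 3, (p.1 i • LZ i + p.2.2 i • LY i)) p := by
    simpa [dotProduct] using
      HasFDerivAt.fun_sum (fun i (_ : i ∈ Finset.univ) => (hY i p).fun_mul (hZ i p))
  have h2 : HasFDerivAt (fun q : G3 => q.2.1 ⬝ᵥ q.2.1)
      (∑ i : Fin 3, (p.2.1 i • LX i + p.2.1 i • LX i)) p := by
    simpa [dotProduct] using
      HasFDerivAt.fun_sum (fun i (_ : i ∈ Finset.univ) => (hX i p).fun_mul (hX i p))
  simpa [Cas3] using h1.fun_add (h2.const_mul (1/2 : ℝ))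

lemma hC2 (p : G3) : HasFDerivAt (Cas3 1)
    (∑ i : Fin 3, (p.2.1 i • LZ i + p.2.2 i • LX i)) p := by
  simpa [Cas3, dotProduct] using
    HasFDerivAt.fun_sum (fun i (_ : i ∈ Finset.univ) => (hX i p).fun_mul (hZ i p))

lemma hC3 (p : G3) : HasFDerivAt (Cas3 2)
    (∑ i : Fin 3, (p.2.2 i • LZ i + p.2.2 i • LZ i)) p := by
  simpa [Cas3, dotProduct] using
    HasFDerivAt.fun_sum (fun i (_ : i ∈ Finset.univ) => (hZ i p).fun_mul (hZ i p))

lemma gY_C1 (p : G3) : gradY (Cas3 0) p = p.2.2 := by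
  funext b
  simp [gradY, (hC1 p).fderiv, LY, LX, LZ, Pi.single_apply, Finset.mul_sum]
lemma gX_C1 (p : G3) : gradX (Cas3 0) p = p.2.1 := by
  funext b
  fin_cases b <;>
    simp [gradX, (hC1 p).fderiv, LY, LX, LZ, Fin.sum_univ_three] <;> ring
lemma gZ_C1 (p : G3) : gradZ (Cas3 0) p = p.1 := by
  funext b
  simp [gradZ, (hC1 p).fderiv, LY, LX, LZ, Pi.single_apply, Finset.mul_sum]

lemma gY_C2 (p : G3) : gradY (Cas3 1) p = 0 := by
  funext b
  simp [gradY, (hC2 p).fderiv, LY, LX, LZ, Pi.single_apply]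
lemma gX_C2 (p : G3) : gradX (Cas3 1) p = p.2.2 := by
  funext b
  simp [gradX, (hC2 p).fderiv, LY, LX, LZ, Pi.single_apply]
lemma gZ_C2 (p : G3) : gradZ (Cas3 1) p = p.2.1 := by
  funext b
  simp [gradZ, (hC2 p).fderiv, LY, LX, LZ, Pi.single_apply]

lemma gY_C3 (p : G3) : gradY (Cas3 2) p = 0 := by
  funext b
  simp [gradY, (hC3 p).fderiv, LY, LX, LZ, Pi.single_apply]
lemma gX_C3 (p : G3) : gradX (Cas3 2) p = 0 := by
  funext b
  simp [gradX, (hC3 p).fderiv, LY, LX, LZ, Pi.single_apply]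
lemma gZ_C3 (p : G3) : gradZ (Cas3 2) p = (2:ℝ) • p.2.2 := by
  funext b
  fin_cases b <;>
    simp [gradZ, (hC3 p).fderiv, LY, LX, LZ, Fin.sum_univ_three] <;> ring

-- coordinate gradients
lemma gY_c0 (a : Fin 3) (p : G3) : gradY (coord3 0 a) p = Pi.single a 1 := by
  funext b
  have h : HasFDerivAt (coord3 0 a) (LY a) p := hY a p
  simp [gradY, h.fderiv, LY, Pi.single_apply, eq_comm]
lemma gX_c0 (a : Fin 3) (p : G3) : gradX (coord3 0 a) p = 0 := by
  funext b
  have h : HasFDerivAt (coord3 0 a) (LY a) p := hY a p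
  simp [gradX, h.fderiv, LY]
lemma gZ_c0 (a : Fin 3) (p : G3) : gradZ (coord3 0 a) p = 0 := by
  funext b
  have h : HasFDerivAt (coord3 0 a) (LY a) p := hY a p
  simp [gradZ, h.fderiv, LY]

lemma gY_c1 (a : Fin 3) (p : G3) : gradY (coord3 1 a) p = 0 := by
  funext b
  have h : HasFDerivAt (coord3 1 a) (LX a) p := hX a p
  simp [gradY, h.fderiv, LX]
lemma gX_c1 (a : Fin 3) (p : G3) : gradX (coord3 1 a) p = Pi.single a 1 := by
  funext b
  have h : HasFDerivAt (coord3 1 a) (LX a) p := hX a p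
  simp [gradX, h.fderiv, LX, Pi.single_apply, eq_comm]
lemma gZ_c1 (a : Fin 3) (p : G3) : gradZ (coord3 1 a) p = 0 := by
  funext b
  have h : HasFDerivAt (coord3 1 a) (LX a) p := hX a p
  simp [gradZ, h.fderiv, LX]

lemma gY_c2 (a : Fin 3) (p : G3) : gradY (coord3 2 a) p = 0 := by
  funext b
  have h : HasFDerivAt (coord3 2 a) (LZ a) p := hZ a p
  simp [gradY, h.fderiv, LZ]
lemma gX_c2 (a : Fin 3) (p : G3) : gradX (coord3 2 a) p = 0 := by
  funext b
  have h : HasFDerivAt (coord3 2 a) (LZ a) p := hZ a p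
  simp [gradX, h.fderiv, LZ]
lemma gZ_c2 (a : Fin 3) (p : G3) : gradZ (coord3 2 a) p = Pi.single a 1 := by
  funext b
  have h : HasFDerivAt (coord3 2 a) (LZ a) p := hZ a p
  simp [gradZ, h.fderiv, LZ, Pi.single_apply, eq_comm]

lemma tp_swap (u v w : Fin 3 → ℝ) : u ⬝ᵥ (v ⨯₃ w) + v ⬝ᵥ (u ⨯₃ w) = 0 := by
  rw [triple_product_permutation u v w, ← cross_anticomm, dotProduct_neg]
  ring

/-- `C^(1)`, `C^(2)`, `C^(3)` are Casimir functions of `g^(3)`: their Poisson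
bracket with every coordinate function vanishes. -/
theorem stmt2 (k s a : Fin 3) (p : G3) :
    pb3 (Cas3 k) (coord3 s a) p = 0 := by
  fin_cases k <;> fin_cases s <;>
    simp only [show (⟨0, by omega⟩ : Fin 3) = 0 from rfl,
      show (⟨1, by omega⟩ : Fin 3) = 1 from rfl,
      show (⟨2, by omega⟩ : Fin 3) = 2 from rfl] <;>
    simp only [pb3, Fin.isValue, gY_C1, gX_C1, gZ_C1, gY_C2, gX_C2, gZ_C2,
      gY_C3, gX_C3, gZ_C3, gY_c0, gX_c0, gZ_c0, gY_c1, gX_c1, gZ_c1,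
      gY_c2, gX_c2, gZ_c2, map_zero, LinearMap.zero_apply, _root_.map_smul,
      LinearMap.smul_apply, LinearMap.map_zero, dotProduct_zero,
      dotProduct_smul, add_zero, zero_add, smul_eq_mul,
      dot_self_cross, dot_cross_self, mul_zero] <;>
    first
      | rfl
      | linear_combination tp_swap p.1 p.2.2 (Pi.single a 1)
      | linear_combination tp_swap p.2.1 p.2.2 (Pi.single a 1)
end
end

section
/- The quantities C_1 = 2⟨y,z⟩ + ⟨x,x⟩, C_2 = 2⟨x,z⟩, and C_3 = ⟨z,z⟩ are conserved along any solution of the system ẏ = b∧x, ẋ = y∧x + b∧z, ż = y∧z. -/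
open Matrix

noncomputable section

private lemma comp_eval {f : ℝ → (Fin 3 → ℝ)} {f' : Fin 3 → ℝ} {t : ℝ}
    (hf : HasDerivAt f f' t) (i : Fin 3) :
    HasDerivAt (fun s => f s i) (f' i) t := by
  exact ((ContinuousLinearMap.proj i : (Fin 3 → ℝ) →L[ℝ] ℝ).hasFDerivAt.comp_hasDerivAt t hf)

private lemma dot_deriv {f g : ℝ → (Fin 3 → ℝ)} {f' g' : Fin 3 → ℝ} {t : ℝ}
    (hf : HasDerivAt f f' t) (hg : HasDerivAt g g' t) :
    HasDerivAt (fun s => f s ⬝ᵥ g s) (f' ⬝ᵥ g t + f t ⬝ᵥ g') t := by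
  simp only [dotProduct, Fin.sum_univ_three]
  have h := (((comp_eval hf 0).mul (comp_eval hg 0)).add
    ((comp_eval hf 1).mul (comp_eval hg 1))).add
    ((comp_eval hf 2).mul (comp_eval hg 2))
  convert h using 1
  · rfl
  · rfl
  · rfl
  ring

/-- `C₁ = 2⟨y,z⟩ + ⟨x,x⟩`, `C₂ = 2⟨x,z⟩`, `C₃ = ⟨z,z⟩` are conserved along any
solution of the system `ẏ = b∧x`, `ẋ = y∧x + b∧z`, `ż = y∧z`. -/
theorem stmt6 (b : Fin 3 → ℝ) (y x z : ℝ → (Fin 3 → ℝ))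
    (hy : ∀ t, HasDerivAt y (b ⨯₃ x t) t)
    (hx : ∀ t, HasDerivAt x (y t ⨯₃ x t + b ⨯₃ z t) t)
    (hz : ∀ t, HasDerivAt z (y t ⨯₃ z t) t) :
    (∀ t, HasDerivAt (fun s => 2 * (y s ⬝ᵥ z s) + x s ⬝ᵥ x s) 0 t) ∧
    (∀ t, HasDerivAt (fun s => 2 * (x s ⬝ᵥ z s)) 0 t) ∧
    (∀ t, HasDerivAt (fun s => z s ⬝ᵥ z s) 0 t) := by
  refine ⟨fun t => ?_, fun t => ?_, fun t => ?_⟩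
  · have h := ((dot_deriv (hy t) (hz t)).const_mul 2).add (dot_deriv (hx t) (hx t))
    convert h using 1
    · rfl
    · rfl
    · rfl
    simp [crossProduct, dotProduct, Fin.sum_univ_three]
    ring
  · have h := (dot_deriv (hx t) (hz t)).const_mul 2
    convert h using 1
    · rfl
    · rfl
    simp [crossProduct, dotProduct, Fin.sum_univ_three]
    ring
  · have h := dot_deriv (hz t) (hz t)
    convert h using 1
    simp [crossProduct, dotProduct, Fin.sum_univ_three]
    ring
end
end
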